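/- Let $E \subseteq \mathbb{R}^n$ be Lebesgue-measurable with $|E| < \infty$, let $\eta \in L^\infty(E)$ be nonnegative with $\|\eta\|_{L^1(E)} > 0$, let $m \in (0,1)$, and let $u$ be a nonnegative measurable function on $E$ with $u\eta \in L^1(E)$; set $\lambda := (u)_E^\eta$. Then there is a constant $c > 0$ depending only on $m$ such that for every $a > 0$, $\big|a^m - \lambda^m\big| \le \frac{c}{\|\eta\|_{L^1(E)}}\int_E |u^m - a^m|\,\chi_{\{u \le 2a\}}\,\eta\,dx \; + \; c\,\Big(\frac{1}{\|\eta\|_{L^1(E)}}\int_E |u^m - a^m|^{1/m}\,\chi_{\{u > 2a\}}\,\eta\,dx\Big)^{m}$. -/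

import Mathlib

open MeasureTheory

open Real


private lemma tangent_lower {m x y : ℝ} (hm0 : 0 < m) (hm1 : m < 1)
    (hx : 0 ≤ x) (hxy : x ≤ y) : m * y ^ (m - 1) * (y - x) ≤ y ^ m - x ^ m := by
  rcases eq_or_lt_of_le (hx.trans hxy) with hy | hy
  · have hx0 : x = 0 := le_antisymm (hxy.trans_eq hy.symm) hx
    simp [← hy, hx0, Real.zero_rpow hm0.ne']
  · have hb := rpow_one_add_le_one_add_mul_self (s := x / y - 1)
      (by rw [le_sub_iff_add_le, neg_add_cancel]; positivity) hm0.le hm1.le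
    rw [add_sub_cancel] at hb
    have hxm : (x / y) ^ m * y ^ m = x ^ m := by
      rw [← Real.mul_rpow (div_nonneg hx hy.le) hy.le, div_mul_cancel₀ _ hy.ne']
    have h2 : x ^ m ≤ (1 + m * (x / y - 1)) * y ^ m := by
      rw [← hxm]
      exact mul_le_mul_of_nonneg_right hb (Real.rpow_nonneg hy.le m)
    have h3 : (x / y - 1) * y ^ m = (x - y) * y ^ (m - 1) := by
      rw [Real.rpow_sub_one hy.ne']
      field_simp
    nlinarith [h2, h3]

private lemma tangent_upper {m x y : ℝ} (hm0 : 0 < m) (hm1 : m < 1)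
    (hx : 0 < x) (hxy : x ≤ y) : y ^ m - x ^ m ≤ m * x ^ (m - 1) * (y - x) := by
  have hb := rpow_one_add_le_one_add_mul_self (s := y / x - 1)
    (by have : 0 ≤ y / x := div_nonneg (hx.le.trans hxy) hx.le; linarith) hm0.le hm1.le
  rw [add_sub_cancel] at hb
  have hym : (y / x) ^ m * x ^ m = y ^ m := by
    rw [← Real.mul_rpow (div_nonneg (hx.le.trans hxy) hx.le) hx.le,
      div_mul_cancel₀ _ hx.ne']
  have h2 : y ^ m ≤ (1 + m * (y / x - 1)) * x ^ m := by
    rw [← hym]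
    exact mul_le_mul_of_nonneg_right hb (Real.rpow_nonneg hx.le m)
  have h3 : (y / x - 1) * x ^ m = (y - x) * x ^ (m - 1) := by
    rw [Real.rpow_sub_one hx.ne']
    field_simp
  nlinarith [h2, h3]

private lemma rpow_add_le {m x y : ℝ} (hm0 : 0 < m) (hm1 : m < 1)
    (hx : 0 ≤ x) (hy : 0 ≤ y) : (x + y) ^ m ≤ x ^ m + y ^ m := by
  have h := NNReal.rpow_add_le_add_rpow x.toNNReal y.toNNReal hm0.le hm1.le
  have h2 : ((x.toNNReal + y.toNNReal : NNReal) : ℝ) ^ m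
      ≤ ((x.toNNReal : ℝ)) ^ m + ((y.toNNReal : ℝ)) ^ m := by
    exact_mod_cast h
  rwa [NNReal.coe_add, Real.coe_toNNReal x hx, Real.coe_toNNReal y hy] at h2

private lemma abs_rpow_sub_rpow {m x y : ℝ} (hm0 : 0 < m) (hm1 : m < 1)
    (hx : 0 ≤ x) (hy : 0 ≤ y) : |x ^ m - y ^ m| ≤ |x - y| ^ m := by
  wlog hxy : y ≤ x generalizing x y
  · rw [abs_sub_comm, abs_sub_comm x y]
    exact this hy hx (le_of_not_ge hxy)
  have h1 : x ^ m ≤ (x - y) ^ m + y ^ m := by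
    calc x ^ m = (x - y + y) ^ m := by ring_nf
    _ ≤ (x - y) ^ m + y ^ m := rpow_add_le hm0 hm1 (by linarith) hy
  have h2 : y ^ m ≤ x ^ m := Real.rpow_le_rpow hy hxy hm0.le
  rw [abs_of_nonneg (by linarith), abs_of_nonneg (by linarith)]
  linarith

private lemma ptwise_small {m u a : ℝ} (hm0 : 0 < m) (hm1 : m < 1)
    (hu : 0 ≤ u) (ha : 0 < a) (h2a : u ≤ 2 * a) :
    |u - a| ≤ 2 ^ (1 - m) / m * a ^ (1 - m) * |u ^ m - a ^ m| := by
  set x := min u a with hx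
  set y := max u a with hy
  clear_value x y
  have hxy : x ≤ y := by rw [hx, hy]; exact min_le_max
  have hx0 : 0 ≤ x := by rw [hx]; exact le_min hu ha.le
  have hy0 : 0 < y := by rw [hy]; exact lt_max_of_lt_right ha
  have hy2a : y ≤ 2 * a := by rw [hy]; exact max_le h2a (by linarith)
  have hyx : y - x = |u - a| := by
    rw [hx, hy, abs_sub_comm]; exact max_sub_min_eq_abs u a
  have habs : y ^ m - x ^ m = |u ^ m - a ^ m| := by
    rcases le_total u a with h | h
    · rw [hx, hy, min_eq_left h, max_eq_right h, abs_sub_comm,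
        abs_of_nonneg (by linarith [Real.rpow_le_rpow hu h hm0.le])]
    · rw [hx, hy, min_eq_right h, max_eq_left h,
        abs_of_nonneg (by linarith [Real.rpow_le_rpow ha.le h hm0.le])]
  have ht := tangent_lower hm0 hm1 hx0 hxy
  have h2am : (2 * a) ^ (m - 1) ≤ y ^ (m - 1) :=
    rpow_le_rpow_of_nonpos hy0 hy2a (by linarith)
  have hmain : m * (2 * a) ^ (m - 1) * |u - a| ≤ |u ^ m - a ^ m| := by
    rw [← hyx, ← habs]
    calc m * (2 * a) ^ (m - 1) * (y - x) ≤ m * y ^ (m - 1) * (y - x) := by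
          apply mul_le_mul_of_nonneg_right _ (by linarith)
          exact mul_le_mul_of_nonneg_left h2am hm0.le
      _ ≤ y ^ m - x ^ m := ht
  have e1 : (2:ℝ) ^ (m - 1) * 2 ^ (1 - m) = 1 := by
    rw [← Real.rpow_add two_pos]; norm_num
  have e2 : a ^ (m - 1) * a ^ (1 - m) = 1 := by
    rw [← Real.rpow_add ha]; norm_num
  have hid : m * (2 * a) ^ (m - 1) * (2 ^ (1 - m) / m * a ^ (1 - m)) = 1 := by
    rw [Real.mul_rpow (by norm_num : (0:ℝ) ≤ 2) ha.le]
    have e3 : m * (2 ^ (m - 1) * a ^ (m - 1)) * (2 ^ (1 - m) / m * a ^ (1 - m))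
        = m / m * (2 ^ (m - 1) * 2 ^ (1 - m)) * (a ^ (m - 1) * a ^ (1 - m)) := by
      ring
    rw [e3, e1, e2, div_self hm0.ne']
    ring
  have hpos : (0:ℝ) ≤ 2 ^ (1 - m) / m * a ^ (1 - m) := by positivity
  calc |u - a| = m * (2 * a) ^ (m - 1) * (2 ^ (1 - m) / m * a ^ (1 - m)) * |u - a| := by
        rw [hid, one_mul]
    _ = 2 ^ (1 - m) / m * a ^ (1 - m) * (m * (2 * a) ^ (m - 1) * |u - a|) := by ring
    _ ≤ 2 ^ (1 - m) / m * a ^ (1 - m) * |u ^ m - a ^ m| :=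
        mul_le_mul_of_nonneg_left hmain hpos

private lemma ptwise_large {m u a : ℝ} (hm0 : 0 < m)
    (ha : 0 < a) (h2a : 2 * a < u) :
    |u - a| ≤ (1 - 2 ^ (-m)) ^ (-(1 / m)) * |u ^ m - a ^ m| ^ (1 / m) := by
  have hd : (0:ℝ) < 1 - 2 ^ (-m) := by
    have := rpow_lt_one_of_one_lt_of_neg (by norm_num : (1:ℝ) < 2) (by linarith : -m < 0)
    linarith
  have hu0 : (0:ℝ) < u := by linarith
  have hua : a ≤ u := by linarith
  have h1 : a ^ m ≤ 2 ^ (-m) * u ^ m := by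
    have h' : a ^ m ≤ (u / 2) ^ m := Real.rpow_le_rpow ha.le (by linarith) hm0.le
    rw [div_rpow hu0.le (by norm_num : (0:ℝ) ≤ 2)] at h'
    rw [Real.rpow_neg (by norm_num : (0:ℝ) ≤ 2)]
    rw [div_eq_mul_inv] at h'
    linarith [h']
  have h2 : (u - a) ^ m ≤ u ^ m :=
    Real.rpow_le_rpow (by linarith) (by linarith) hm0.le
  have h3 : (1 - 2 ^ (-m)) * (u - a) ^ m ≤ u ^ m - a ^ m := by
    have h4 : (1 - 2 ^ (-m)) * (u - a) ^ m ≤ (1 - 2 ^ (-m)) * u ^ m :=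
      mul_le_mul_of_nonneg_left h2 hd.le
    have h5 : (1 - 2 ^ (-m)) * u ^ m = u ^ m - 2 ^ (-m) * u ^ m := by ring
    linarith
  have hum : a ^ m ≤ u ^ m := Real.rpow_le_rpow ha.le hua hm0.le
  have habs : |u ^ m - a ^ m| = u ^ m - a ^ m := abs_of_nonneg (by linarith)
  have hstep : (1 - 2 ^ (-m)) ^ (1 / m) * (u - a) ≤ |u ^ m - a ^ m| ^ (1 / m) := by
    have h6 := Real.rpow_le_rpow
      (mul_nonneg hd.le (rpow_nonneg (by linarith : (0:ℝ) ≤ u - a) m)) h3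
      (by positivity : (0:ℝ) ≤ 1 / m)
    rw [Real.mul_rpow hd.le (rpow_nonneg (by linarith) m)] at h6
    have h7 : ((u - a) ^ m) ^ (1 / m) = u - a := by
      rw [← Real.rpow_mul (by linarith : (0:ℝ) ≤ u - a),
        mul_one_div_cancel hm0.ne', Real.rpow_one]
    rw [h7] at h6
    rw [habs]
    exact h6
  have hd1 : ((1:ℝ) - 2 ^ (-m)) ^ (-(1 / m)) * ((1:ℝ) - 2 ^ (-m)) ^ (1 / m) = 1 := by
    rw [← Real.rpow_add hd]; norm_num
  calc |u - a| = u - a := abs_of_nonneg (by linarith)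
    _ = (1 - 2 ^ (-m)) ^ (-(1 / m)) * ((1 - 2 ^ (-m)) ^ (1 / m) * (u - a)) := by
        rw [← mul_assoc, hd1, one_mul]
    _ ≤ (1 - 2 ^ (-m)) ^ (-(1 / m)) * |u ^ m - a ^ m| ^ (1 / m) :=
        mul_le_mul_of_nonneg_left hstep (rpow_nonneg hd.le _)

private lemma key_scalar (m : ℝ) (hm0 : 0 < m) (hm1 : m < 1) :
    ∃ c : ℝ, 0 < c ∧
      ∀ a lam S₁ S₂ A B : ℝ, 0 < a → 0 ≤ lam → 0 ≤ S₁ → 0 ≤ S₂ → 0 ≤ A → 0 ≤ B →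
        |lam - a| ≤ S₁ + S₂ →
        S₁ ≤ 2 ^ (1 - m) / m * a ^ (1 - m) * A →
        S₂ ≤ (1 - 2 ^ (-m)) ^ (-(1 / m)) * B →
        |a ^ m - lam ^ m| ≤ c * A + c * B ^ m := by
  set K : ℝ := 2 ^ (1 - m) / m with hKdef
  set c' : ℝ := (1 - 2 ^ (-m)) ^ (-(1 / m)) with hc'def
  have hd : (0:ℝ) < 1 - 2 ^ (-m) := by
    have := rpow_lt_one_of_one_lt_of_neg (by norm_num : (1:ℝ) < 2) (by linarith : -m < 0)
    linarith
  have hK : 0 < K := div_pos (rpow_pos_of_pos two_pos _) hm0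
  have hc' : 0 < c' := rpow_pos_of_pos hd _
  have hc'm : 0 < c' ^ m := rpow_pos_of_pos hc' _
  have h4m : (0:ℝ) < 4 ^ m := rpow_pos_of_pos (by norm_num) m
  have hmK : m * K = 2 ^ (1 - m) := by rw [hKdef]; field_simp
  clear_value K c'
  refine ⟨4 * K + 4 + (4 + 4 ^ m) * c' ^ m, by positivity, ?_⟩
  intro a lam S₁ S₂ A B ha hlam hS₁ hS₂ hA hB h1 h2 h3
  set c : ℝ := 4 * K + 4 + (4 + 4 ^ m) * c' ^ m with hcdef
  have hBm : 0 ≤ B ^ m := rpow_nonneg hB m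
  have h4c : (4:ℝ) ≤ c := by rw [hcdef]; nlinarith [mul_pos h4m hc'm]
  have h4Kc : 4 * K ≤ c := by rw [hcdef]; nlinarith [mul_pos h4m hc'm]
  have hKc : K ≤ c := by linarith
  have h2cm : 2 * c' ^ m ≤ c := by rw [hcdef]; nlinarith [mul_pos h4m hc'm]
  have hcmc : c' ^ m ≤ c := by linarith
  have h41c : (4 ^ m + 1) * c' ^ m ≤ c := by rw [hcdef]; nlinarith
  clear_value c
  have hcApos : 0 ≤ c * A := mul_nonneg (by linarith) hA
  have hcBpos : 0 ≤ c * B ^ m := mul_nonneg (by linarith) hBm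
  -- S₂ ^ m ≤ c' ^ m * B ^ m
  have hS2m : S₂ ^ m ≤ c' ^ m * B ^ m := by
    calc S₂ ^ m ≤ (c' * B) ^ m := Real.rpow_le_rpow hS₂ h3 hm0.le
    _ = c' ^ m * B ^ m := Real.mul_rpow hc'.le hB
  have hQ : (0:ℝ) < a ^ (m - 1) := rpow_pos_of_pos ha _
  have hR : (0:ℝ) < a ^ (1 - m) := rpow_pos_of_pos ha _
  have hP : (0:ℝ) < 2 ^ (1 - m) := rpow_pos_of_pos two_pos _
  have hQR : a ^ (m - 1) * a ^ (1 - m) = 1 := by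
    rw [← Real.rpow_add ha]; norm_num
  have h2le : (2:ℝ) ^ (1 - m) ≤ 2 := by
    calc (2:ℝ) ^ (1 - m) ≤ 2 ^ (1:ℝ) :=
      rpow_le_rpow_of_exponent_le one_le_two (by linarith)
    _ = 2 := rpow_one 2
  have ha2 : (a / 2) ^ (m - 1) = a ^ (m - 1) * 2 ^ (1 - m) := by
    rw [div_rpow ha.le (by norm_num : (0:ℝ) ≤ 2)]
    rw [div_eq_mul_inv, ← Real.rpow_neg (by norm_num : (0:ℝ) ≤ 2)]
    ring_nf
  by_cases hcase : S₁ + S₂ < a / 2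
  · -- close case
    have hlam2 : a / 2 < lam := by
      have h' : |lam - a| < a / 2 := lt_of_le_of_lt h1 hcase
      have := abs_lt.mp h'
      linarith [this.1]
    set x := min a lam with hx
    set y := max a lam with hy
    clear_value x y
    have hx2 : a / 2 < x := by rw [hx]; exact lt_min (by linarith) hlam2
    have hxy : x ≤ y := by rw [hx, hy]; exact min_le_max
    have hyx : y - x = |lam - a| := by rw [hx, hy]; exact max_sub_min_eq_abs a lam
    have habs : |a ^ m - lam ^ m| = y ^ m - x ^ m := by
      rcases le_total a lam with h | h
      · rw [hx, hy, min_eq_left h, max_eq_right h, abs_sub_comm,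
          abs_of_nonneg (by linarith [Real.rpow_le_rpow ha.le h hm0.le])]
      · rw [hx, hy, min_eq_right h, max_eq_left h,
          abs_of_nonneg (by linarith [Real.rpow_le_rpow hlam h hm0.le])]
    have hxpos : 0 < x := lt_trans (by linarith) hx2
    have ht := tangent_upper hm0 hm1 hxpos hxy
    have hxm1 : x ^ (m - 1) ≤ (a / 2) ^ (m - 1) :=
      rpow_le_rpow_of_nonpos (by linarith) hx2.le (by linarith)
    have hyxle : y - x ≤ S₁ + S₂ := by rw [hyx]; exact h1
    -- main estimate
    have key1 : m * (a / 2) ^ (m - 1) * S₁ ≤ 4 * A := by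
      have hP2 : (0:ℝ) ≤ m * (a / 2) ^ (m - 1) :=
        mul_nonneg hm0.le (rpow_nonneg (by linarith) _)
      have step := mul_le_mul_of_nonneg_left h2 hP2
      refine le_trans step ?_
      have h22 : (2:ℝ) ^ (1 - m) * 2 ^ (1 - m) ≤ 4 := by
        have := mul_le_mul h2le h2le hP.le (by norm_num : (0:ℝ) ≤ 2)
        linarith
      calc m * (a / 2) ^ (m - 1) * (K * a ^ (1 - m) * A)
          = (m * K) * ((a / 2) ^ (m - 1) * a ^ (1 - m)) * A := by ring
        _ = 2 ^ (1 - m) * (a ^ (m - 1) * 2 ^ (1 - m) * a ^ (1 - m)) * A := by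
            rw [hmK, ha2]
        _ = (2 ^ (1 - m) * 2 ^ (1 - m)) * (a ^ (m - 1) * a ^ (1 - m)) * A := by ring
        _ = (2 ^ (1 - m) * 2 ^ (1 - m)) * A := by rw [hQR, mul_one]
        _ ≤ 4 * A := mul_le_mul_of_nonneg_right h22 hA
    have key2 : m * (a / 2) ^ (m - 1) * S₂ ≤ 2 * (c' ^ m * B ^ m) := by
      have hS2a : a ^ (m - 1) * S₂ ≤ S₂ ^ m := by
        rcases eq_or_lt_of_le hS₂ with h0 | h0
        · rw [← h0, mul_zero, Real.zero_rpow hm0.ne']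
        · have hh : a ^ (m - 1) ≤ S₂ ^ (m - 1) :=
            rpow_le_rpow_of_nonpos h0 (by linarith) (by linarith)
          have hSS : S₂ ^ (m - 1) * S₂ = S₂ ^ m := by
            nth_rewrite 2 [← Real.rpow_one S₂]
            rw [← Real.rpow_add h0]; norm_num
          calc a ^ (m - 1) * S₂ ≤ S₂ ^ (m - 1) * S₂ :=
            mul_le_mul_of_nonneg_right hh hS₂
          _ = S₂ ^ m := hSS
      have hm2 : m * 2 ^ (1 - m) ≤ 2 := by
        have h1' : m * 2 ^ (1 - m) ≤ 1 * 2 ^ (1 - m) :=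
          mul_le_mul_of_nonneg_right (by linarith) hP.le
        linarith
      have step : m * (a / 2) ^ (m - 1) * S₂ ≤ 2 * (a ^ (m - 1) * S₂) := by
        rw [ha2]
        have e : m * (a ^ (m - 1) * 2 ^ (1 - m)) * S₂
            = (m * 2 ^ (1 - m)) * (a ^ (m - 1) * S₂) := by ring
        rw [e]
        exact mul_le_mul_of_nonneg_right hm2 (mul_nonneg hQ.le hS₂)
      refine le_trans step ?_
      have : a ^ (m - 1) * S₂ ≤ c' ^ m * B ^ m := le_trans hS2a hS2m
      linarith [mul_nonneg hQ.le hS₂]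
    have hmain : |a ^ m - lam ^ m| ≤ m * (a / 2) ^ (m - 1) * (S₁ + S₂) := by
      rw [habs]
      refine le_trans ht ?_
      calc m * x ^ (m - 1) * (y - x) ≤ m * (a / 2) ^ (m - 1) * (y - x) := by
            apply mul_le_mul_of_nonneg_right _ (by linarith)
            exact mul_le_mul_of_nonneg_left hxm1 hm0.le
        _ ≤ m * (a / 2) ^ (m - 1) * (S₁ + S₂) := by
            apply mul_le_mul_of_nonneg_left hyxle
            exact mul_nonneg hm0.le (rpow_nonneg (by linarith) _)
    have hexp : m * (a / 2) ^ (m - 1) * (S₁ + S₂)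
        = m * (a / 2) ^ (m - 1) * S₁ + m * (a / 2) ^ (m - 1) * S₂ := by ring
    have ht2 : |a ^ m - lam ^ m| ≤ 4 * A + 2 * (c' ^ m * B ^ m) := by
      linarith [hmain, key1, key2]
    refine le_trans ht2 ?_
    have t1 : 4 * A ≤ c * A := mul_le_mul_of_nonneg_right h4c hA
    have t2 : 2 * (c' ^ m * B ^ m) ≤ c * B ^ m := by
      calc 2 * (c' ^ m * B ^ m) = (2 * c' ^ m) * B ^ m := by ring
      _ ≤ c * B ^ m := mul_le_mul_of_nonneg_right h2cm hBm
    linarith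
  · -- far case : a / 2 ≤ S₁ + S₂
    push_neg at hcase
    have step1 : |a ^ m - lam ^ m| ≤ S₁ ^ m + S₂ ^ m := by
      calc |a ^ m - lam ^ m| ≤ |a - lam| ^ m := abs_rpow_sub_rpow hm0 hm1 ha.le hlam
      _ ≤ (S₁ + S₂) ^ m := by
          apply Real.rpow_le_rpow (abs_nonneg _) _ hm0.le
          rw [abs_sub_comm]; exact h1
      _ ≤ S₁ ^ m + S₂ ^ m := rpow_add_le hm0 hm1 hS₁ hS₂
    by_cases hS1a : a ≤ S₁
    · -- S₁ ≥ a : S₁ ^ m ≤ K * A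
      have hS1pos : 0 < S₁ := lt_of_lt_of_le ha hS1a
      have e1 : S₁ ^ m * a ^ (1 - m) ≤ S₁ := by
        have e0 : S₁ ^ m * S₁ ^ (1 - m) = S₁ := by
          rw [← Real.rpow_add hS1pos]; norm_num
        calc S₁ ^ m * a ^ (1 - m) ≤ S₁ ^ m * S₁ ^ (1 - m) := by
              apply mul_le_mul_of_nonneg_left
                (Real.rpow_le_rpow ha.le hS1a (by linarith))
                (rpow_nonneg hS₁ m)
        _ = S₁ := e0
      have e2 : S₁ ^ m * a ^ (1 - m) ≤ K * A * a ^ (1 - m) := by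
        refine le_trans e1 (le_trans h2 (le_of_eq (by ring)))
      have e3 : S₁ ^ m ≤ K * A := le_of_mul_le_mul_right (by linarith) hR
      have ht2 : |a ^ m - lam ^ m| ≤ K * A + c' ^ m * B ^ m := by linarith
      refine le_trans ht2 ?_
      have t1 : K * A ≤ c * A := mul_le_mul_of_nonneg_right hKc hA
      have t2 : c' ^ m * B ^ m ≤ c * B ^ m := mul_le_mul_of_nonneg_right hcmc hBm
      linarith
    · push_neg at hS1a
      have hS1m : S₁ ^ m ≤ a ^ m := Real.rpow_le_rpow hS₁ hS1a.le hm0.le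
      by_cases h4 : a / 4 ≤ S₁
      · -- a ^ m ≤ 4 K A
        have e1 : a ≤ 4 * (K * a ^ (1 - m) * A) := by
          have := le_trans h4 h2
          linarith
        have ham : a * a ^ (m - 1) = a ^ m := by
          nth_rewrite 1 [← Real.rpow_one a]
          rw [← Real.rpow_add ha]; norm_num
        have e2 : a ^ m ≤ 4 * K * A := by
          have hstep := mul_le_mul_of_nonneg_right e1 hQ.le
          calc a ^ m = a * a ^ (m - 1) := ham.symm
            _ ≤ 4 * (K * a ^ (1 - m) * A) * a ^ (m - 1) := hstep
            _ = 4 * K * A * (a ^ (m - 1) * a ^ (1 - m)) := by ring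
            _ = 4 * K * A := by rw [hQR, mul_one]
        have ht2 : |a ^ m - lam ^ m| ≤ 4 * K * A + c' ^ m * B ^ m := by linarith
        refine le_trans ht2 ?_
        have t1 : 4 * K * A ≤ c * A := mul_le_mul_of_nonneg_right h4Kc hA
        have t2 : c' ^ m * B ^ m ≤ c * B ^ m := mul_le_mul_of_nonneg_right hcmc hBm
        linarith
      · push_neg at h4
        have h5 : a / 4 ≤ S₂ := by linarith
        have e1 : a ≤ 4 * c' * B := by
          have := le_trans h5 h3
          linarith
        have e2 : a ^ m ≤ 4 ^ m * (c' ^ m * B ^ m) := by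
          calc a ^ m ≤ (4 * c' * B) ^ m := Real.rpow_le_rpow ha.le e1 hm0.le
          _ = 4 ^ m * (c' ^ m * B ^ m) := by
              rw [Real.mul_rpow (by positivity) hB, Real.mul_rpow (by norm_num) hc'.le]
              ring
        have hexp : (4 ^ m + 1) * (c' ^ m * B ^ m)
            = 4 ^ m * (c' ^ m * B ^ m) + c' ^ m * B ^ m := by ring
        have ht2 : |a ^ m - lam ^ m| ≤ (4 ^ m + 1) * (c' ^ m * B ^ m) := by
          linarith [step1, hS1m, e2, hS2m]
        refine le_trans ht2 ?_
        have t1 : (4 ^ m + 1) * (c' ^ m * B ^ m) ≤ c * B ^ m := by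
          calc (4 ^ m + 1) * (c' ^ m * B ^ m) = ((4 ^ m + 1) * c' ^ m) * B ^ m := by ring
          _ ≤ c * B ^ m := mul_le_mul_of_nonneg_right h41c hBm
        linarith

/-- For `m ∈ (0,1)` there is a constant `c > 0`, depending only on `m`, bounding
`|a^m - λ^m|` (with `λ` the `η`-weighted mean of `u`) by the weighted mean of
`|u^m - a^m|` on `{u ≤ 2a}` plus the `m`-th power of the weighted mean of
`|u^m - a^m|^{1/m}` on `{u > 2a}`. -/
theorem stmt_8 (m : ℝ) (hm0 : 0 < m) (hm1 : m < 1) :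
    ∃ c : ℝ, 0 < c ∧
      ∀ (n : ℕ) (E : Set (Fin n → ℝ)), MeasurableSet E → volume E < ⊤ →
        ∀ η u : (Fin n → ℝ) → ℝ, Measurable η → (∀ x ∈ E, 0 ≤ η x) →
          (∃ C : ℝ, ∀ x ∈ E, η x ≤ C) → 0 < ∫ x in E, η x →
          Measurable u → (∀ x, 0 ≤ u x) →
          IntegrableOn (fun x => u x * η x) E →
          ∀ a : ℝ, 0 < a →
            |a ^ m - ((∫ y in E, u y * η y) / (∫ y in E, η y)) ^ m| ≤
              c / (∫ y in E, η y) *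
                  (∫ x in E,
                    {z | u z ≤ 2 * a}.indicator (fun z => |u z ^ m - a ^ m| * η z) x) +
                c * ((∫ x in E,
                    {z | 2 * a < u z}.indicator
                      (fun z => |u z ^ m - a ^ m| ^ (1 / m) * η z) x) /
                  (∫ y in E, η y)) ^ m := by
  obtain ⟨c, hc, hkey⟩ := key_scalar m hm0 hm1
  refine ⟨c, hc, ?_⟩
  intro n E hE hEfin η u hηm hη0 hηC hI hum hu0 hInt a ha
  obtain ⟨C, hC⟩ := hηC
  have hTS : {z | 2 * a < u z} = {z | u z ≤ 2 * a}ᶜ := by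
    ext z; simp [not_le]
  rw [hTS]
  set S : Set (Fin n → ℝ) := {z | u z ≤ 2 * a} with hSdef
  have hSm : MeasurableSet S := measurableSet_le hum measurable_const
  set I : ℝ := ∫ y in E, η y with hIdef
  set f1 : (Fin n → ℝ) → ℝ := S.indicator (fun z => |u z ^ m - a ^ m| * η z) with hf1def
  set f2 : (Fin n → ℝ) → ℝ :=
    Sᶜ.indicator (fun z => |u z ^ m - a ^ m| ^ (1 / m) * η z) with hf2def
  set g1 : (Fin n → ℝ) → ℝ := S.indicator (fun z => |u z - a| * η z) with hg1def
  set g2 : (Fin n → ℝ) → ℝ := Sᶜ.indicator (fun z => |u z - a| * η z) with hg2def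
  clear_value f1 f2 g1 g2
  -- measurability
  have hmum : Measurable fun z => u z ^ m :=
    (Real.continuous_rpow_const hm0.le).measurable.comp hum
  have hmabs : Measurable fun z => |u z ^ m - a ^ m| :=
    (hmum.sub measurable_const).abs
  have hmf1 : Measurable f1 := by
    rw [hf1def]
    exact (hmabs.mul hηm).indicator hSm
  have hmf2 : Measurable f2 := by
    rw [hf2def]
    have hm12 : Measurable fun z => |u z ^ m - a ^ m| ^ (1 / m) :=
      (Real.continuous_rpow_const (by positivity)).measurable.comp hmabs
    exact (hm12.mul hηm).indicator hSm.compl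
  have hmg1 : Measurable g1 := by
    rw [hg1def]
    exact (((hum.sub measurable_const).abs).mul hηm).indicator hSm
  have hmg2 : Measurable g2 := by
    rw [hg2def]
    exact (((hum.sub measurable_const).abs).mul hηm).indicator hSm.compl
  -- a.e. facts on E
  have haeE : ∀ (P : (Fin n → ℝ) → Prop), (∀ x ∈ E, P x) →
      ∀ᵐ x ∂(volume.restrict E), P x := fun P hP =>
    (ae_restrict_iff' hE).2 (Filter.Eventually.of_forall hP)
  -- integrability of η
  have hηInt : IntegrableOn η E := by
    apply Measure.integrableOn_of_bounded hEfin.ne hηm.aestronglyMeasurable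
      (M := max C 0)
    apply haeE
    intro x hx
    rw [Real.norm_eq_abs, abs_of_nonneg (hη0 x hx)]
    exact le_max_of_le_left (hC x hx)
  -- integrability of f1 (bounded)
  have hf1Int : IntegrableOn f1 E := by
    apply Measure.integrableOn_of_bounded hEfin.ne hmf1.aestronglyMeasurable
      (M := ((2 * a) ^ m + a ^ m) * max C 0)
    apply haeE
    intro x hx
    rw [Real.norm_eq_abs]
    by_cases h : x ∈ S
    · rw [hf1def, Set.indicator_of_mem h]
      have hb1 : |u x ^ m - a ^ m| ≤ (2 * a) ^ m + a ^ m := by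
        have h1 : u x ^ m ≤ (2 * a) ^ m := Real.rpow_le_rpow (hu0 x) h hm0.le
        have h2 : (0:ℝ) ≤ u x ^ m := rpow_nonneg (hu0 x) m
        have h3 : (0:ℝ) ≤ a ^ m := rpow_nonneg ha.le m
        rw [abs_le]; constructor <;> nlinarith
      have hb2 : η x ≤ max C 0 := le_max_of_le_left (hC x hx)
      rw [abs_of_nonneg (mul_nonneg (abs_nonneg _) (hη0 x hx))]
      exact mul_le_mul hb1 hb2 (hη0 x hx) (by positivity)
    · rw [hf1def, Set.indicator_of_notMem h, abs_zero]
      positivity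
  -- integrability of f2 (dominated by u * η)
  have hf2Int : IntegrableOn f2 E := by
    apply Integrable.mono hInt hmf2.aestronglyMeasurable
    apply haeE
    intro x hx
    rw [Real.norm_eq_abs, Real.norm_eq_abs]
    by_cases h : x ∈ Sᶜ
    · rw [hf2def, Set.indicator_of_mem h]
      have h2a : 2 * a < u x := by simpa [hSdef, not_le] using h
      have hux : (0:ℝ) < u x := by linarith
      have hum' : a ^ m ≤ u x ^ m := Real.rpow_le_rpow ha.le (by linarith) hm0.le
      have hb : |u x ^ m - a ^ m| ^ (1 / m) ≤ u x := by
        have e1 : |u x ^ m - a ^ m| = u x ^ m - a ^ m := abs_of_nonneg (by linarith)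
        rw [e1]
        have e2 : u x ^ m - a ^ m ≤ u x ^ m := by
          have : (0:ℝ) ≤ a ^ m := rpow_nonneg ha.le m
          linarith
        have e3 := Real.rpow_le_rpow (by linarith) e2 (by positivity : (0:ℝ) ≤ 1 / m)
        have e4 : (u x ^ m) ^ (1 / m) = u x := by
          rw [← Real.rpow_mul hux.le, mul_one_div_cancel hm0.ne', Real.rpow_one]
        rwa [e4] at e3
      rw [abs_of_nonneg (mul_nonneg (rpow_nonneg (abs_nonneg _) _) (hη0 x hx)),
        abs_of_nonneg (mul_nonneg (hu0 x) (hη0 x hx))]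
      exact mul_le_mul_of_nonneg_right hb (hη0 x hx)
    · rw [hf2def, Set.indicator_of_notMem h, abs_zero]
      rw [abs_of_nonneg (mul_nonneg (hu0 x) (hη0 x hx))]
      exact mul_nonneg (hu0 x) (hη0 x hx)
  -- integrability of g1 (bounded)
  have hg1Int : IntegrableOn g1 E := by
    apply Measure.integrableOn_of_bounded hEfin.ne hmg1.aestronglyMeasurable
      (M := 3 * a * max C 0)
    apply haeE
    intro x hx
    rw [Real.norm_eq_abs]
    by_cases h : x ∈ S
    · rw [hg1def, Set.indicator_of_mem h]
      have h2a : u x ≤ 2 * a := h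
      have hb1 : |u x - a| ≤ 3 * a := by
        rw [abs_le]; constructor <;> [linarith [hu0 x]; linarith]
      have hb2 : η x ≤ max C 0 := le_max_of_le_left (hC x hx)
      rw [abs_of_nonneg (mul_nonneg (abs_nonneg _) (hη0 x hx))]
      exact mul_le_mul hb1 hb2 (hη0 x hx) (by positivity)
    · rw [hg1def, Set.indicator_of_notMem h, abs_zero]
      positivity
  -- integrability of g2 (dominated by u * η)
  have hg2Int : IntegrableOn g2 E := by
    apply Integrable.mono hInt hmg2.aestronglyMeasurable
    apply haeE
    intro x hx
    rw [Real.norm_eq_abs, Real.norm_eq_abs]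
    by_cases h : x ∈ Sᶜ
    · rw [hg2def, Set.indicator_of_mem h]
      have h2a : 2 * a < u x := by simpa [hSdef, not_le] using h
      have hb : |u x - a| ≤ u x := by
        rw [abs_le]; constructor <;> [linarith; linarith]
      rw [abs_of_nonneg (mul_nonneg (abs_nonneg _) (hη0 x hx)),
        abs_of_nonneg (mul_nonneg (hu0 x) (hη0 x hx))]
      exact mul_le_mul_of_nonneg_right hb (hη0 x hx)
    · rw [hg2def, Set.indicator_of_notMem h, abs_zero]
      rw [abs_of_nonneg (mul_nonneg (hu0 x) (hη0 x hx))]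
      exact mul_nonneg (hu0 x) (hη0 x hx)
  -- nonnegativity of integrals
  have hind_nonneg : ∀ (W : Set (Fin n → ℝ)) (F : (Fin n → ℝ) → ℝ),
      (∀ x ∈ E, 0 ≤ F x) → ∀ x ∈ E, 0 ≤ W.indicator F x := by
    intro W F hF x hx
    by_cases h : x ∈ W
    · rw [Set.indicator_of_mem h]; exact hF x hx
    · rw [Set.indicator_of_notMem h]
  have hIf1 : 0 ≤ ∫ x in E, f1 x := by
    rw [hf1def]
    exact setIntegral_nonneg hE (hind_nonneg S _ fun x hx =>
      mul_nonneg (abs_nonneg _) (hη0 x hx))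
  have hIf2 : 0 ≤ ∫ x in E, f2 x := by
    rw [hf2def]
    exact setIntegral_nonneg hE (hind_nonneg Sᶜ _ fun x hx =>
      mul_nonneg (rpow_nonneg (abs_nonneg _) _) (hη0 x hx))
  have hIg1 : 0 ≤ ∫ x in E, g1 x := by
    rw [hg1def]
    exact setIntegral_nonneg hE (hind_nonneg S _ fun x hx =>
      mul_nonneg (abs_nonneg _) (hη0 x hx))
  have hIg2 : 0 ≤ ∫ x in E, g2 x := by
    rw [hg2def]
    exact setIntegral_nonneg hE (hind_nonneg Sᶜ _ fun x hx =>
      mul_nonneg (abs_nonneg _) (hη0 x hx))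
  have hIu : 0 ≤ ∫ x in E, u x * η x :=
    setIntegral_nonneg hE fun x hx => mul_nonneg (hu0 x) (hη0 x hx)
  -- H1 : |lam - a| ≤ S₁ + S₂
  have hsub : ∫ x in E, (u x - a) * η x = (∫ x in E, u x * η x) - a * I := by
    have e : (fun x => (u x - a) * η x) = fun x => u x * η x - a * η x := by
      funext x; ring
    rw [e, integral_sub hInt (hηInt.const_mul a), integral_const_mul, hIdef]
  have habsle : |∫ x in E, (u x - a) * η x| ≤ ∫ x in E, |u x - a| * η x := by
    have h1 := norm_integral_le_integral_norm (μ := volume.restrict E)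
      (fun x => (u x - a) * η x)
    rw [Real.norm_eq_abs] at h1
    refine le_trans h1 (le_of_eq ?_)
    apply integral_congr_ae
    filter_upwards [haeE _ hη0] with x hx
    rw [norm_mul, Real.norm_eq_abs, Real.norm_eq_abs, abs_of_nonneg hx]
  have hsplit : ∫ x in E, |u x - a| * η x = (∫ x in E, g1 x) + ∫ x in E, g2 x := by
    rw [← integral_add hg1Int hg2Int]
    apply integral_congr_ae
    apply Filter.Eventually.of_forall
    intro x
    have := congrFun (Set.indicator_self_add_compl S (fun z => |u z - a| * η z)) x
    rw [hg1def, hg2def]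
    exact this.symm
  have hH1 : |(∫ x in E, u x * η x) / I - a| ≤
      (∫ x in E, g1 x) / I + (∫ x in E, g2 x) / I := by
    have e : (∫ x in E, u x * η x) / I - a = (∫ x in E, (u x - a) * η x) / I := by
      rw [hsub]; field_simp
    rw [e, abs_div, abs_of_pos hI, ← add_div]
    gcongr
    exact habsle.trans (le_of_eq hsplit)
  -- H2
  have hptw1 : ∀ x ∈ E, g1 x ≤ (2 ^ (1 - m) / m * a ^ (1 - m)) * f1 x := by
    intro x hx
    by_cases h : x ∈ S
    · rw [hg1def, hf1def, Set.indicator_of_mem h, Set.indicator_of_mem h]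
      have hpt := ptwise_small hm0 hm1 (hu0 x) ha h
      calc |u x - a| * η x
          ≤ (2 ^ (1 - m) / m * a ^ (1 - m) * |u x ^ m - a ^ m|) * η x :=
            mul_le_mul_of_nonneg_right hpt (hη0 x hx)
        _ = (2 ^ (1 - m) / m * a ^ (1 - m)) * (|u x ^ m - a ^ m| * η x) := by ring
    · rw [hg1def, hf1def, Set.indicator_of_notMem h, Set.indicator_of_notMem h,
        mul_zero]
  have hH2int : (∫ x in E, g1 x) ≤
      (2 ^ (1 - m) / m * a ^ (1 - m)) * ∫ x in E, f1 x := by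
    have hmono := setIntegral_mono_on hg1Int
      (hf1Int.const_mul (2 ^ (1 - m) / m * a ^ (1 - m))) hE hptw1
    rwa [integral_const_mul] at hmono
  have hH2 : (∫ x in E, g1 x) / I ≤
      2 ^ (1 - m) / m * a ^ (1 - m) * ((∫ x in E, f1 x) / I) := by
    rw [mul_div_assoc']
    gcongr
  -- H3
  have hptw2 : ∀ x ∈ E, g2 x ≤ ((1 - 2 ^ (-m)) ^ (-(1 / m))) * f2 x := by
    intro x hx
    by_cases h : x ∈ Sᶜ
    · rw [hg2def, hf2def, Set.indicator_of_mem h, Set.indicator_of_mem h]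
      have h2a : 2 * a < u x := by simpa [hSdef, not_le] using h
      have hpt := ptwise_large hm0 ha h2a
      calc |u x - a| * η x
          ≤ ((1 - 2 ^ (-m)) ^ (-(1 / m)) * |u x ^ m - a ^ m| ^ (1 / m)) * η x :=
            mul_le_mul_of_nonneg_right hpt (hη0 x hx)
        _ = ((1 - 2 ^ (-m)) ^ (-(1 / m))) * (|u x ^ m - a ^ m| ^ (1 / m) * η x) := by
            ring
    · rw [hg2def, hf2def, Set.indicator_of_notMem h, Set.indicator_of_notMem h,
        mul_zero]
  have hH3int : (∫ x in E, g2 x) ≤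
      ((1 - 2 ^ (-m)) ^ (-(1 / m))) * ∫ x in E, f2 x := by
    have hmono := setIntegral_mono_on hg2Int
      (hf2Int.const_mul ((1 - 2 ^ (-m)) ^ (-(1 / m)))) hE hptw2
    rwa [integral_const_mul] at hmono
  have hH3 : (∫ x in E, g2 x) / I ≤
      (1 - 2 ^ (-m)) ^ (-(1 / m)) * ((∫ x in E, f2 x) / I) := by
    rw [mul_div_assoc']
    gcongr
  -- apply the scalar lemma
  have hfin := hkey a ((∫ x in E, u x * η x) / I) ((∫ x in E, g1 x) / I)
    ((∫ x in E, g2 x) / I) ((∫ x in E, f1 x) / I) ((∫ x in E, f2 x) / I)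
    ha (div_nonneg hIu hI.le) (div_nonneg hIg1 hI.le) (div_nonneg hIg2 hI.le)
    (div_nonneg hIf1 hI.le) (div_nonneg hIf2 hI.le) hH1 hH2 hH3
  have e1 : c / I * (∫ x in E, f1 x) = c * ((∫ x in E, f1 x) / I) := by ring
  rw [e1]
  exact hfin
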